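/- Let (μ : M → P) be a crossed module and let ι : P → Q be a surjective group homomorphism with kernel K. Let [M,K] denote the subgroup of M generated by the elements m⁻¹(m^k) for m ∈ M, k ∈ K. Then: [M,K] is a normal subgroup of M invariant under the P-action; the composite ι ∘ μ vanishes on [M,K] and so induces a homomorphism ∂ : M/[M,K] → Q; the P-action descends to a well-defined Q-action on M/[M,K] in which q ∈ Q acts via any p ∈ P with ι(p) = q; (∂ : M/[M,K] → Q) with this action is a crossed module; and together with the quotient morphism j : M → M/[M,K] it is an induced crossed module of (μ : M → P) along ι. In particular ι_*M ≅ M/[M,K]. -/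

import Mathlib

universe u

/-- A crossed module `(μ : M → P)`: groups `M`, `P`, a (right) action of `P` on `M` by
group automorphisms, written `act m p` for `m ^ p`, and a homomorphism `μ : M →* P`
satisfying CM1: `μ (m ^ p) = p⁻¹ * μ m * p` and CM2: `n ^ (μ m) = m⁻¹ * n * m`. -/
structure CrossedModule (M P : Type u) [Group M] [Group P] where
  μ : M →* P
  act : M → P → M
  act_mul : ∀ m n p, act (m * n) p = act m p * act n p
  act_one : ∀ m, act m 1 = m
  act_act : ∀ m p q, act (act m p) q = act m (p * q)
  cm1 : ∀ m p, μ (act m p) = p⁻¹ * μ m * p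
  cm2 : ∀ m n, act n (μ m) = m⁻¹ * n * m

/-- A morphism of crossed modules `(f, g) : (μ : M → P) → (ν : N → Q)`:
group homomorphisms `f : M → N`, `g : P → Q` with `ν ∘ f = g ∘ μ` and
`f (m ^ p) = (f m) ^ (g p)`. -/
def CrossedModule.IsMorphism {M P N Q : Type u} [Group M] [Group P] [Group N] [Group Q]
    (X : CrossedModule M P) (Y : CrossedModule N Q) (f : M →* N) (g : P →* Q) : Prop :=
  (∀ m, Y.μ (f m) = g (X.μ m)) ∧ ∀ m p, f (X.act m p) = Y.act (f m) (g p)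

/-- `(∂ : I → Q)` together with `j : M → I` is an induced crossed module of `(μ : M → P)`
along `ι : P → Q`: `(j, ι)` is a morphism of crossed modules, and for every crossed module
`(ν : N → Q)` and morphism `(f, ι) : (μ : M → P) → (ν : N → Q)` there is a unique group
homomorphism `φ : I → N` with `ν ∘ φ = ∂`, `φ (x ^ q) = (φ x) ^ q`, and `φ ∘ j = f`. -/
def IsInducedCrossedModule {M P Q I : Type u} [Group M] [Group P] [Group Q] [Group I]
    (X : CrossedModule M P) (ι : P →* Q) (Y : CrossedModule I Q) (j : M →* I) : Prop :=
  CrossedModule.IsMorphism X Y j ι ∧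
  ∀ (N : Type u) [Group N] (Z : CrossedModule N Q) (f : M →* N),
    CrossedModule.IsMorphism X Z f ι →
    ∃! φ : I →* N, (∀ x, Z.μ (φ x) = Y.μ x) ∧
      (∀ x q, φ (Y.act x q) = Z.act (φ x) q) ∧ ∀ m, φ (j m) = f m

namespace CrossedModule

variable {M P : Type u} [Group M] [Group P] (X : CrossedModule M P)

/-- The action by a fixed `p : P` as a monoid homomorphism. -/
def actHom (p : P) : M →* M where
  toFun m := X.act m p
  map_one' := by
    have h : X.act 1 p * X.act 1 p = X.act 1 p := by
      rw [← X.act_mul, one_mul]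
    exact mul_eq_right.mp h
  map_mul' m n := X.act_mul m n p

lemma act_one_left (p : P) : X.act 1 p = 1 := (X.actHom p).map_one

lemma act_inv (m : M) (p : P) : X.act m⁻¹ p = (X.act m p)⁻¹ :=
  (X.actHom p).map_inv m

end CrossedModule

/-- Let `(μ : M → P)` be a crossed module, `ι : P → Q` a surjective homomorphism with kernel
`K`, and `[M,K]` the subgroup of `M` generated by the `m⁻¹ * (m ^ k)`, `m ∈ M`, `k ∈ K`.
Then `[M,K]` is normal in `M` and invariant under the `P`-action; `ι ∘ μ` vanishes on `[M,K]`
and so induces `∂ : M/[M,K] → Q`; the `P`-action descends to a `Q`-action on `M/[M,K]` in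
which `q = ι p` acts via `p`; the result is a crossed module; and together with the quotient
map `j : M → M/[M,K]` it is an induced crossed module of `(μ : M → P)` along `ι`.
In particular `ι_* M ≅ M/[M,K]`. -/
theorem induced_of_surjective {M P Q : Type u} [Group M] [Group P] [Group Q]
    (X : CrossedModule M P) (ι : P →* Q) (hι : Function.Surjective ι)
    (T : Subgroup M)
    (hT : T = Subgroup.closure {x | ∃ (m : M) (k : P), k ∈ ι.ker ∧ x = m⁻¹ * X.act m k}) :
    T.Normal ∧
    (∀ p : P, ∀ m ∈ T, X.act m p ∈ T) ∧
    (∀ m ∈ T, ι (X.μ m) = 1) ∧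
    ∀ hN : T.Normal,
      letI := hN
      ∃ Y : CrossedModule (M ⧸ T) Q,
        (∀ m : M, Y.μ (QuotientGroup.mk m) = ι (X.μ m)) ∧
        (∀ (m : M) (p : P),
          Y.act (QuotientGroup.mk m) (ι p) = QuotientGroup.mk (X.act m p)) ∧
        IsInducedCrossedModule X ι Y (QuotientGroup.mk' T) := by
  have hgen : ∀ (m : M) (k : P), k ∈ ι.ker → m⁻¹ * X.act m k ∈ T := by
    intro m k hk
    rw [hT]
    exact Subgroup.subset_closure ⟨m, k, hk, rfl⟩
  -- Normality
  have hconj : ∀ (g n : M), n ∈ T → g * n * g⁻¹ ∈ T := by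
    intro g n hn
    have hle : T.map (MulAut.conj g).toMonoidHom ≤ T := by
      conv_lhs => rw [hT]
      rw [MonoidHom.map_closure, Subgroup.closure_le]
      rintro _ ⟨x, ⟨m, k, hk, rfl⟩, rfl⟩
      have key : (MulAut.conj g).toMonoidHom (m⁻¹ * X.act m k)
          = ((m * g⁻¹)⁻¹ * X.act (m * g⁻¹) k) * ((g⁻¹)⁻¹ * X.act g⁻¹ k)⁻¹ := by
        have : (MulAut.conj g).toMonoidHom (m⁻¹ * X.act m k)
            = g * (m⁻¹ * X.act m k) * g⁻¹ := rfl
        rw [this, X.act_mul m g⁻¹ k]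
        group
      rw [key]
      exact mul_mem (hgen (m * g⁻¹) k hk) (inv_mem (hgen g⁻¹ k hk))
    exact hle ⟨n, hn, rfl⟩
  have hNorm : T.Normal := ⟨fun n hn g => hconj g n hn⟩
  -- P-invariance
  have hinv : ∀ (p : P), ∀ m ∈ T, X.act m p ∈ T := by
    intro p m hm
    have hle : T.map (X.actHom p) ≤ T := by
      conv_lhs => rw [hT]
      rw [MonoidHom.map_closure, Subgroup.closure_le]
      rintro _ ⟨x, ⟨m, k, hk, rfl⟩, rfl⟩
      have hk' : p⁻¹ * k * p ∈ ι.ker := by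
        have hk1 : ι k = 1 := hk
        simp [MonoidHom.mem_ker, map_mul, map_inv, hk1]
      have key : X.actHom p (m⁻¹ * X.act m k)
          = (X.act m p)⁻¹ * X.act (X.act m p) (p⁻¹ * k * p) := by
        have : X.actHom p (m⁻¹ * X.act m k) = X.act (m⁻¹ * X.act m k) p := rfl
        rw [this, X.act_mul, X.act_inv, X.act_act, X.act_act]
        congr 2
        group
      rw [key]
      exact hgen (X.act m p) (p⁻¹ * k * p) hk'
    exact hle ⟨m, hm, rfl⟩
  -- ι ∘ μ vanishes on T
  have hker : ∀ m ∈ T, ι (X.μ m) = 1 := by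
    have hle : T ≤ (ι.comp X.μ).ker := by
      rw [hT, Subgroup.closure_le]
      rintro _ ⟨m, k, hk, rfl⟩
      have hk1 : ι k = 1 := hk
      simp [MonoidHom.mem_ker, map_mul, map_inv, X.cm1, hk1]
    intro m hm
    exact hle hm
  refine ⟨hNorm, hinv, hker, ?_⟩
  intro hN
  haveI := hN
  -- key well-definedness lemma
  have L1 : ∀ (m m' : M) (p p' : P), m⁻¹ * m' ∈ T → ι p = ι p' →
      (X.act m p)⁻¹ * X.act m' p' ∈ T := by
    intro m m' p p' ht hp
    have hk : p⁻¹ * p' ∈ ι.ker := by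
      simp [MonoidHom.mem_ker, map_mul, map_inv, hp]
    have e0 : p * (p⁻¹ * p') = p' := by group
    have e1 : X.act m' p' = X.act (X.act m p) (p⁻¹ * p') * X.act (m⁻¹ * m') p' := by
      rw [X.act_act, e0, ← X.act_mul]
      congr 1
      group
    have e2 : (X.act m p)⁻¹ * X.act m' p'
        = ((X.act m p)⁻¹ * X.act (X.act m p) (p⁻¹ * p')) * X.act (m⁻¹ * m') p' := by
      rw [e1]; group
    rw [e2]
    exact mul_mem (hgen (X.act m p) (p⁻¹ * p') hk) (hinv p' _ ht)
  -- section of ι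
  set σ : Q → P := Function.surjInv hι with hσdef
  have hσ : ∀ q, ι (σ q) = q := fun q => Function.surjInv_eq hι q
  -- the descended action
  set aQ : M ⧸ T → Q → M ⧸ T := fun x q =>
    Quotient.map' (fun m => X.act m (σ q))
      (fun a b hab => QuotientGroup.leftRel_apply.mpr
        (L1 a b (σ q) (σ q) (QuotientGroup.leftRel_apply.mp hab) rfl)) x with haQdef
  have haQmk : ∀ (m : M) (q : Q),
      aQ (QuotientGroup.mk m) q = QuotientGroup.mk (X.act m (σ q)) := fun m q => rfl
  have haQ : ∀ (m : M) (p : P),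
      aQ (QuotientGroup.mk m) (ι p) = QuotientGroup.mk (X.act m p) := by
    intro m p
    rw [haQmk]
    exact QuotientGroup.eq.mpr (L1 m m (σ (ι p)) p (by simpa using one_mem T) (hσ (ι p)))
  -- the descended boundary map
  set μbar : M ⧸ T →* Q := QuotientGroup.lift T (ι.comp X.μ)
    (fun m hm => hker m hm) with hμdef
  have hμmk : ∀ m : M, μbar (QuotientGroup.mk m) = ι (X.μ m) := fun m => rfl
  have Yact_mul : ∀ x y (q : Q), aQ (x * y) q = aQ x q * aQ y q := by
    intro x y q
    obtain ⟨p, rfl⟩ := hι q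
    refine QuotientGroup.induction_on x fun m => ?_
    refine QuotientGroup.induction_on y fun n => ?_
    rw [← QuotientGroup.mk_mul, haQ, haQ, haQ, X.act_mul, QuotientGroup.mk_mul]
  have Yact_one : ∀ x, aQ x 1 = x := by
    intro x
    refine QuotientGroup.induction_on x fun m => ?_
    rw [show (1 : Q) = ι 1 from (map_one ι).symm, haQ, X.act_one]
  have Yact_act : ∀ x (q q' : Q), aQ (aQ x q) q' = aQ x (q * q') := by
    intro x q q'
    obtain ⟨p, rfl⟩ := hι q
    obtain ⟨p', rfl⟩ := hι q'
    refine QuotientGroup.induction_on x fun m => ?_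
    rw [haQ, haQ, X.act_act, ← map_mul, haQ]
  have Ycm1 : ∀ x (q : Q), μbar (aQ x q) = q⁻¹ * μbar x * q := by
    intro x q
    obtain ⟨p, rfl⟩ := hι q
    refine QuotientGroup.induction_on x fun m => ?_
    rw [haQ, hμmk, hμmk, X.cm1, map_mul, map_mul, map_inv]
  have Ycm2 : ∀ x y, aQ y (μbar x) = x⁻¹ * y * x := by
    intro x y
    refine QuotientGroup.induction_on x fun m => ?_
    refine QuotientGroup.induction_on y fun n => ?_
    rw [hμmk, haQ, X.cm2, QuotientGroup.mk_mul, QuotientGroup.mk_mul,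
      QuotientGroup.mk_inv]
  refine ⟨⟨μbar, aQ, Yact_mul, Yact_one, Yact_act, Ycm1, Ycm2⟩, hμmk, haQ, ?_⟩
  constructor
  · exact ⟨fun m => hμmk m, fun m p => (haQ m p).symm⟩
  · intro N _ Z f hf
    obtain ⟨hf1, hf2⟩ := hf
    have hkf : T ≤ f.ker := by
      rw [hT, Subgroup.closure_le]
      rintro _ ⟨m, k, hk, rfl⟩
      have hk1 : ι k = 1 := hk
      simp [MonoidHom.mem_ker, map_mul, map_inv, hf2, hk1, Z.act_one]
    refine ⟨QuotientGroup.lift T f hkf, ⟨?_, ?_, ?_⟩, ?_⟩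
    · intro x
      refine QuotientGroup.induction_on x fun m => ?_
      show Z.μ (f m) = μbar (QuotientGroup.mk m)
      rw [hf1, hμmk]
    · intro x q
      obtain ⟨p, rfl⟩ := hι q
      refine QuotientGroup.induction_on x fun m => ?_
      show QuotientGroup.lift T f hkf (aQ (QuotientGroup.mk m) (ι p)) = _
      rw [haQ]
      show f (X.act m p) = Z.act (f m) (ι p)
      exact hf2 m p
    · intro m
      rfl
    · intro ψ hψ
      obtain ⟨h1, h2, h3⟩ := hψ
      ext x
      simpa using h3 x
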